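/- Finite multiple zeta values satisfy the stuffle relation: for any indices 𝐤 and 𝐤′, ζ_𝒜(𝐤)·ζ_𝒜(𝐤′) = ζ_𝒜(𝐤 * 𝐤′) in 𝒜. In particular, the ℚ-subspace 𝒵_𝒜 of 𝒜 spanned by all finite multiple zeta values is a ℚ-subalgebra of 𝒜. -/

import Mathlib

open scoped BigOperators

set_option synthInstance.maxHeartbeats 400000

namespace FMP

/-- The type of prime numbers. -/
abbrev PP := Nat.Primes

instance (p : PP) : Fact (Nat.Prime (p : ℕ)) := ⟨p.2⟩

/-- The ideal of families vanishing at all but finitely many primes. -/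
def cofinIdeal (R : PP → Type) [∀ p, CommRing (R p)] : Ideal (∀ p, R p) where
  carrier := {f | ∀ᶠ p in Filter.cofinite, f p = 0}
  add_mem' := by
    intro f g hf hg
    show ∀ᶠ p in Filter.cofinite, (f + g) p = 0
    simp only [Set.mem_setOf_eq] at hf hg
    filter_upwards [hf, hg] with p h1 h2
    simp [h1, h2]
  zero_mem' := by
    show ∀ᶠ p in Filter.cofinite, (0 : ∀ p, R p) p = 0
    exact Filter.Eventually.of_forall fun p => rfl
  smul_mem' := by
    intro c f hf
    show ∀ᶠ p in Filter.cofinite, (c • f) p = 0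
    simp only [Set.mem_setOf_eq] at hf
    filter_upwards [hf] with p h
    simp [h]

lemma mem_cofinIdeal {R : PP → Type} [∀ p, CommRing (R p)] (f : ∀ p, R p) :
    f ∈ cofinIdeal R ↔ ∀ᶠ p in Filter.cofinite, f p = 0 := Iff.rfl

/-- The ring 𝒜 = (∏ₚ 𝔽ₚ)/(⊕ₚ 𝔽ₚ). -/
abbrev A : Type := (∀ p : PP, ZMod p) ⧸ cofinIdeal fun p => ZMod p

/-- The ring ℬ = (∏ₚ 𝔽ₚ[T])/(⊕ₚ 𝔽ₚ[T]). -/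
abbrev B : Type := (∀ p : PP, Polynomial (ZMod p)) ⧸ cofinIdeal fun p => Polynomial (ZMod p)

noncomputable def Amk : (∀ p : PP, ZMod p) →+* A := Ideal.Quotient.mk _
noncomputable def Bmk : (∀ p : PP, Polynomial (ZMod p)) →+* B := Ideal.Quotient.mk _

/-- The componentwise action of 𝒜 on ℬ, as a ring homomorphism 𝒜 →+* ℬ. -/
noncomputable def AtoB : A →+* B :=
  Ideal.Quotient.lift _
    (Bmk.comp (Pi.ringHom fun p => Polynomial.C.comp (Pi.evalRingHom (fun q : PP => ZMod (q : ℕ)) p)))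
    (fun f hf => by
      rw [RingHom.comp_apply]
      rw [show Bmk = Ideal.Quotient.mk (cofinIdeal fun p => Polynomial (ZMod p)) from rfl]
      rw [Ideal.Quotient.eq_zero_iff_mem, mem_cofinIdeal]
      rw [mem_cofinIdeal] at hf
      filter_upwards [hf] with p h
      exact (congrArg Polynomial.C h).trans Polynomial.C_0)

section QAlgebra

lemma finite_dvd_primes (n : ℤ) (hn : n ≠ 0) : {p : PP | ((p : ℕ) : ℤ) ∣ n}.Finite := by
  have hinj : Function.Injective (fun p : PP => (p : ℕ)) := fun a b h => Subtype.ext h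
  have h1 : {p : PP | ((p : ℕ) : ℤ) ∣ n} ⊆ (fun p : PP => (p : ℕ)) ⁻¹' (Set.Iic n.natAbs) := by
    intro p hp
    simp only [Set.mem_setOf_eq] at hp
    simp only [Set.mem_preimage, Set.mem_Iic]
    have hd : (p : ℕ) ∣ n.natAbs := by
      have := Int.natAbs_dvd_natAbs.mpr hp
      simpa using this
    exact Nat.le_of_dvd (Int.natAbs_pos.mpr hn) hd
  exact Set.Finite.subset ((Set.finite_Iic n.natAbs).preimage (Set.injOn_of_injective hinj)) h1

lemma eventually_intCast_ne (n : ℤ) (hn : n ≠ 0) :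
    ∀ᶠ p : PP in Filter.cofinite, (n : ZMod (p : ℕ)) ≠ 0 := by
  rw [Filter.eventually_cofinite]
  apply Set.Finite.subset (finite_dvd_primes n hn)
  intro p hp
  simp only [Set.mem_setOf_eq, not_not] at hp ⊢
  exact (ZMod.intCast_zmod_eq_zero_iff_dvd n (p : ℕ)).mp hp

lemma isUnit_int_A (n : ℤ) (hn : n ≠ 0) : IsUnit (n : A) := by
  apply IsUnit.of_mul_eq_one (Amk fun p : PP => ((n : ZMod (p : ℕ)))⁻¹)
  have h1 : (n : A) = Amk (n : ∀ p : PP, ZMod p) := (map_intCast Amk n).symm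
  rw [h1, ← map_mul, ← map_one Amk]
  rw [show Amk = Ideal.Quotient.mk (cofinIdeal fun p => ZMod p) from rfl,
    Ideal.Quotient.mk_eq_mk_iff_sub_mem, mem_cofinIdeal]
  filter_upwards [eventually_intCast_ne n hn] with p h
  simp only [Pi.sub_apply, Pi.mul_apply, Pi.intCast_apply, Pi.one_apply,
    mul_inv_cancel₀ h, sub_self]

lemma isUnit_int_B (n : ℤ) (hn : n ≠ 0) : IsUnit (n : B) := by
  apply IsUnit.of_mul_eq_one (Bmk fun p : PP => Polynomial.C ((n : ZMod (p : ℕ)))⁻¹)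
  have h1 : (n : B) = Bmk (n : ∀ p : PP, Polynomial (ZMod p)) := (map_intCast Bmk n).symm
  rw [h1, ← map_mul, ← map_one Bmk]
  rw [show Bmk = Ideal.Quotient.mk (cofinIdeal fun p => Polynomial (ZMod p)) from rfl,
    Ideal.Quotient.mk_eq_mk_iff_sub_mem, mem_cofinIdeal]
  filter_upwards [eventually_intCast_ne n hn] with p h
  simp only [Pi.sub_apply, Pi.mul_apply, Pi.intCast_apply, Pi.one_apply,
    ← Polynomial.C_eq_intCast, ← Polynomial.C_mul, mul_inv_cancel₀ h, Polynomial.C_1, sub_self]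

/-- 𝒜 is a ℚ-algebra. -/
noncomputable instance : Algebra ℚ A := RingHom.toAlgebra <|
  IsLocalization.lift (M := nonZeroDivisors ℤ) (g := Int.castRingHom A)
    (fun y => isUnit_int_A y (nonZeroDivisors.coe_ne_zero y))

/-- ℬ is a ℚ-algebra. -/
noncomputable instance : Algebra ℚ B := RingHom.toAlgebra <|
  IsLocalization.lift (M := nonZeroDivisors ℤ) (g := Int.castRingHom B)
    (fun y => isUnit_int_B y (nonZeroDivisors.coe_ne_zero y))

noncomputable instance : Module ℚ A := Algebra.toModule
noncomputable instance : Module ℚ B := Algebra.toModule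

end QAlgebra

/-- Partial sums: `psum l i = l 0 + ... + l i`. -/
def psum {r : ℕ} (l : Fin r → ℕ) (i : Fin r) : ℕ := ∑ j ∈ Finset.Iic i, l j

/-- The finset of tuples `(l 0, ..., l (r-1))` with `0 < l i < p`. -/
def pf (r p : ℕ) : Finset (Fin r → ℕ) := Fintype.piFinset fun _ => Finset.Ioo 0 p

/-- The denominator `L_1^{k_1} ⋯ L_r^{k_r}` of a term, as an element of 𝔽ₚ.
(Its inverse is `0` whenever some partial sum is divisible by `p`, so taking inverses
of these denominators automatically implements the restricted sums `Σ'`.) -/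
def den (p : PP) (k : List ℕ) (l : Fin k.length → ℕ) : ZMod (p : ℕ) :=
  ∏ i, ((psum l i : ℕ) : ZMod (p : ℕ)) ^ k.get i

/-- The weight of an index. -/
def wt (k : List ℕ) : ℕ := k.sum

/-- The finite multiple zeta value ζ_𝒜(k). -/
noncomputable def zetaA (k : List ℕ) : A :=
  Amk fun p => ∑ l ∈ (pf k.length (p : ℕ)).filter (fun l => ∑ i, l i < (p : ℕ)), (den p k l)⁻¹

/-- The variant ζ^{(i)}_𝒜(k) of finite multiple zeta values. -/
noncomputable def zetaAi (i : ℕ) (k : List ℕ) : A :=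
  Amk fun p => ∑ l ∈ (pf k.length (p : ℕ)).filter
      (fun l => (i - 1) * (p : ℕ) < ∑ j, l j ∧ ∑ j, l j < i * (p : ℕ)), (den p k l)⁻¹

/-- The finite multiple polylogarithm li_k(T) ∈ ℬ. -/
noncomputable def liT (k : List ℕ) : B :=
  Bmk fun p => ∑ l ∈ pf k.length (p : ℕ),
    Polynomial.C ((den p k l)⁻¹) * Polynomial.X ^ (∑ i, l i)

/-- The element T^p of ℬ. -/
noncomputable def Tp : B := Bmk fun p => Polynomial.X ^ (p : ℕ)

/-- The finite multiple polylogarithm li(λ, μ, ν; T) of type (λ, μ, ν). -/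
noncomputable def liType (lam mu nu : List ℕ) : B :=
  Bmk fun p =>
    ∑ l ∈ pf lam.length (p : ℕ), ∑ m ∈ pf mu.length (p : ℕ), ∑ n ∈ pf nu.length (p : ℕ),
      Polynomial.C ((den p lam l * den p mu m *
          ∏ z, ((((∑ i, l i) + (∑ j, m j) + psum n z : ℕ)) : ZMod (p : ℕ)) ^ nu.get z)⁻¹) *
        Polynomial.X ^ ((∑ i, l i) + (∑ j, m j) + (∑ z, n z))

section Words

/-- Shuffle product of words in the letters x (`true`) and y (`false`), as a multiset of words. -/
def shuffleW : List Bool → List Bool → Multiset (List Bool)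
  | [], w => {w}
  | a :: v, [] => {a :: v}
  | a :: v, b :: w => (shuffleW v (b :: w)).map (a :: ·) + (shuffleW (a :: v) w).map (b :: ·)
termination_by v w => v.length + w.length

/-- The word z_{k_1} ⋯ z_{k_r} = x^{k_1-1}y ⋯ x^{k_r-1}y associated to an index
(`true` = x, `false` = y). -/
def wordOf (k : List ℕ) : List Bool := k.flatMap fun ki => List.replicate (ki - 1) true ++ [false]

/-- The index associated to a word (ending in y). -/
def toIndex : List Bool → List ℕ
  | [] => []
  | true :: w =>
    match toIndex w with
    | [] => []
    | k :: rest => (k + 1) :: rest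
  | false :: w => 1 :: toIndex w

/-- li_{𝐤 ш 𝐤'}(T) : the sum of FMPs corresponding to the shuffle product 𝐤 ш 𝐤'. -/
noncomputable def liSh (k k' : List ℕ) : B :=
  ((shuffleW (wordOf k) (wordOf k')).map (fun w => liT (toIndex w))).sum

/-- Stuffle (harmonic) product of indices, as a multiset of indices. -/
def stuffleI : List ℕ → List ℕ → Multiset (List ℕ)
  | [], w => {w}
  | a :: v, [] => {a :: v}
  | a :: v, b :: w =>
      ((stuffleI v (b :: w)).map (a :: ·)) + ((stuffleI (a :: v) w).map (b :: ·)) +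
        ((stuffleI v w).map ((a + b) :: ·))
termination_by v w => v.length + w.length

end Words

section Spans

/-- 𝒵_𝒜 : the ℚ-span of all finite multiple zeta values inside 𝒜. -/
noncomputable def ZAspan : Submodule ℚ A :=
  Submodule.span ℚ {x : A | ∃ k : List ℕ, (∀ i ∈ k, 0 < i) ∧ x = zetaA k}

/-- 𝒵_𝒜[Tᵖ] : the subring of ℬ generated by the image of 𝒵_𝒜 and Tᵖ. -/
noncomputable def ZATp : Subring B :=
  Subring.closure (AtoB '' (ZAspan : Set A) ∪ {Tp})

/-- ℛ = Σ_k 𝒵_𝒜[Tᵖ]·li_k(T). -/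
noncomputable def Rtot : Submodule ℚ B :=
  Submodule.span ℚ {x : B | ∃ c ∈ ZATp, ∃ k : List ℕ, (∀ i ∈ k, 0 < i) ∧ x = c * liT k}

end Spans



section StuffleProof

variable {R : Type*} [CommRing R]

/-- Nested harmonic-type sum over chains `n < s_1 < ... < s_r < p`. -/
def Hs (g : ℕ → ℕ → R) (p : ℕ) : ℕ → List ℕ → R
  | _, [] => 1
  | n, a :: v => ∑ s ∈ Finset.Ioo n p, g s a * Hs g p s v

@[simp] lemma Hs_nil (g : ℕ → ℕ → R) (p n : ℕ) : Hs g p n [] = 1 := rfl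

lemma Hs_cons (g : ℕ → ℕ → R) (p n a : ℕ) (v : List ℕ) :
    Hs g p n (a :: v) = ∑ s ∈ Finset.Ioo n p, g s a * Hs g p s v := rfl

lemma multiset_sum_map_finsetSum {α : Type*} (m : Multiset α) (t : Finset ℕ)
    (F : ℕ → α → R) :
    ∑ s ∈ t, (m.map (F s)).sum = (m.map fun u => ∑ s ∈ t, F s u).sum := by
  induction m using Multiset.induction with
  | empty => simp
  | cons a m ih => simp [Finset.sum_add_distrib, ih]

lemma sum_Ioo_split {n p s : ℕ} (hs : s ∈ Finset.Ioo n p) (F : ℕ → R) :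
    ∑ t ∈ Finset.Ioo n p, F t =
      ∑ t ∈ Finset.Ioo n s, F t + F s + ∑ t ∈ Finset.Ioo s p, F t := by
  rw [Finset.mem_Ioo] at hs
  have e1 : Finset.Ioo n p = (Finset.Ioo n s ∪ {s}) ∪ Finset.Ioo s p := by
    ext t
    simp only [Finset.mem_Ioo, Finset.mem_union, Finset.mem_singleton]
    omega
  have d1 : Disjoint (Finset.Ioo n s) ({s} : Finset ℕ) := by
    simp [Finset.disjoint_singleton_right]
  have d2 : Disjoint (Finset.Ioo n s ∪ {s}) (Finset.Ioo s p) := by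
    rw [Finset.disjoint_left]
    intro t ht ht'
    simp only [Finset.mem_union, Finset.mem_Ioo, Finset.mem_singleton] at ht ht'
    omega
  rw [e1, Finset.sum_union d2, Finset.sum_union d1, Finset.sum_singleton]

lemma sum_Ioo_lt_comm (n p : ℕ) (F : ℕ → ℕ → R) :
    ∑ s ∈ Finset.Ioo n p, ∑ t ∈ Finset.Ioo n s, F s t =
      ∑ t ∈ Finset.Ioo n p, ∑ s ∈ Finset.Ioo t p, F s t := by
  rw [Finset.sum_sigma', Finset.sum_sigma']
  refine Finset.sum_nbij' (fun x => ⟨x.2, x.1⟩) (fun x => ⟨x.2, x.1⟩) ?_ ?_ ?_ ?_ ?_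
  · rintro ⟨s, t⟩ h
    simp only [Finset.mem_sigma, Finset.mem_Ioo] at h ⊢
    omega
  · rintro ⟨t, s⟩ h
    simp only [Finset.mem_sigma, Finset.mem_Ioo] at h ⊢
    omega
  · rintro ⟨s, t⟩ _; rfl
  · rintro ⟨t, s⟩ _; rfl
  · rintro ⟨s, t⟩ _; rfl

/-- The abstract stuffle relation for nested sums. -/
lemma Hs_mul (g : ℕ → ℕ → R) (hg : ∀ s a b, g s a * g s b = g s (a + b)) (p : ℕ) :
    ∀ (N : ℕ) (v w : List ℕ) (n : ℕ), v.length + w.length ≤ N →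
      Hs g p n v * Hs g p n w = ((stuffleI v w).map (Hs g p n)).sum := by
  intro N
  induction N with
  | zero =>
    intro v w n h
    match v, w with
    | [], w => simp [stuffleI]
    | a :: v, w => simp at h
  | succ N ih =>
    intro v w n h
    match v, w with
    | [], w => simp [stuffleI]
    | a :: v, [] => simp [stuffleI]
    | a :: v, b :: w =>
      have hlen1 : v.length + (b :: w).length ≤ N := by
        simp at h ⊢; omega
      have hlen2 : (a :: v).length + w.length ≤ N := by
        simp at h ⊢; omega
      have hlen3 : v.length + w.length ≤ N := by
        simp at h ⊢; omega
      rw [Hs_cons, Hs_cons, Finset.sum_mul_sum]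
      have split : ∀ s ∈ Finset.Ioo n p,
          ∑ t ∈ Finset.Ioo n p, (g s a * Hs g p s v) * (g t b * Hs g p t w) =
            (∑ t ∈ Finset.Ioo n s, (g s a * Hs g p s v) * (g t b * Hs g p t w))
            + (g s a * Hs g p s v) * (g s b * Hs g p s w)
            + (∑ t ∈ Finset.Ioo s p, (g s a * Hs g p s v) * (g t b * Hs g p t w)) :=
        fun s hs => sum_Ioo_split hs _
      rw [Finset.sum_congr rfl split]
      rw [Finset.sum_add_distrib, Finset.sum_add_distrib]
      -- term A : t > s
      have tA : ∑ s ∈ Finset.Ioo n p, ∑ t ∈ Finset.Ioo s p,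
            (g s a * Hs g p s v) * (g t b * Hs g p t w)
          = (((stuffleI v (b :: w)).map (a :: ·)).map (Hs g p n)).sum := by
        rw [Multiset.map_map]
        have : ∀ s ∈ Finset.Ioo n p,
            ∑ t ∈ Finset.Ioo s p, (g s a * Hs g p s v) * (g t b * Hs g p t w)
              = ((stuffleI v (b :: w)).map fun u => g s a * Hs g p s u).sum := by
          intro s hs
          rw [← Finset.mul_sum, mul_assoc, ← Hs_cons, ih v (b :: w) s hlen1,
            ← Multiset.sum_map_mul_left]
        rw [Finset.sum_congr rfl this, multiset_sum_map_finsetSum _ _ _]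
        refine congrArg Multiset.sum (Multiset.map_congr rfl ?_)
        intro u _
        rw [Function.comp_apply, Hs_cons]
      -- term B : t < s
      have tB : ∑ s ∈ Finset.Ioo n p, ∑ t ∈ Finset.Ioo n s,
            (g s a * Hs g p s v) * (g t b * Hs g p t w)
          = (((stuffleI (a :: v) w).map (b :: ·)).map (Hs g p n)).sum := by
        rw [sum_Ioo_lt_comm, Multiset.map_map]
        have : ∀ t ∈ Finset.Ioo n p,
            ∑ s ∈ Finset.Ioo t p, (g s a * Hs g p s v) * (g t b * Hs g p t w)
              = ((stuffleI (a :: v) w).map fun u => g t b * Hs g p t u).sum := by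
          intro t ht
          have : ∑ s ∈ Finset.Ioo t p, (g s a * Hs g p s v) * (g t b * Hs g p t w)
              = (g t b) * (Hs g p t (a :: v) * Hs g p t w) := by
            rw [Hs_cons, Finset.sum_mul, Finset.mul_sum]
            apply Finset.sum_congr rfl
            intro s _
            ring
          rw [this, ih (a :: v) w t hlen2, ← Multiset.sum_map_mul_left]
        rw [Finset.sum_congr rfl this, multiset_sum_map_finsetSum _ _ _]
        refine congrArg Multiset.sum (Multiset.map_congr rfl ?_)
        intro u _
        rw [Function.comp_apply, Hs_cons]
      -- diagonal term
      have tC : ∑ s ∈ Finset.Ioo n p, (g s a * Hs g p s v) * (g s b * Hs g p s w)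
          = (((stuffleI v w).map ((a + b) :: ·)).map (Hs g p n)).sum := by
        rw [Multiset.map_map]
        have : ∀ s ∈ Finset.Ioo n p,
            (g s a * Hs g p s v) * (g s b * Hs g p s w)
              = ((stuffleI v w).map fun u => g s (a + b) * Hs g p s u).sum := by
          intro s hs
          have e : (g s a * Hs g p s v) * (g s b * Hs g p s w)
              = g s (a + b) * (Hs g p s v * Hs g p s w) := by
            rw [← hg s a b]; ring
          rw [e, ih v w s hlen3, ← Multiset.sum_map_mul_left]
        rw [Finset.sum_congr rfl this, multiset_sum_map_finsetSum _ _ _]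
        refine congrArg Multiset.sum (Multiset.map_congr rfl ?_)
        intro u _
        rw [Function.comp_apply, Hs_cons]
      rw [tA, tB, tC, stuffleI]
      simp only [Multiset.map_add, Multiset.sum_add]
      ring

lemma psum_ite {r : ℕ} (l : Fin r → ℕ) (i : Fin r) :
    psum l i = ∑ j, if j ≤ i then l j else 0 := by
  rw [psum]
  rw [show Finset.Iic i = Finset.univ.filter (· ≤ i) by ext j; simp]
  rw [Finset.sum_filter]

lemma psum_zero {r : ℕ} (l : Fin (r + 1) → ℕ) : psum l 0 = l 0 := by
  rw [psum_ite, Fin.sum_univ_succ]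
  simp [Fin.le_zero_iff, Fin.succ_ne_zero]

lemma psum_succ {r : ℕ} (l : Fin (r + 1) → ℕ) (i : Fin r) :
    psum l i.succ = l 0 + psum (fun j => l j.succ) i := by
  rw [psum_ite, psum_ite, Fin.sum_univ_succ]
  simp [Fin.succ_le_succ_iff, Fin.zero_le]

lemma mem_pf {r p : ℕ} {l : Fin r → ℕ} :
    l ∈ pf r p ↔ ∀ i, 0 < l i ∧ l i < p := by
  simp [pf, Fintype.mem_piFinset, Finset.mem_Ioo]

/-- The filtered tuple sum equals the nested chain sum. -/
lemma tupleSum_eq_Hs (p : ℕ) (g : ℕ → ℕ → R) :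
    ∀ (k : List ℕ) (n : ℕ), n < p →
      (∑ l ∈ (pf k.length p).filter (fun l => n + ∑ i, l i < p),
        ∏ i, g (n + psum l i) (k.get i)) = Hs g p n k := by
  intro k
  induction k with
  | nil =>
    intro n hn
    show (∑ l ∈ (pf 0 p).filter (fun l => n + ∑ i : Fin 0, l i < p),
        ∏ i : Fin 0, g (n + psum l i) (List.get [] i)) = 1
    have hf : (pf 0 p).filter (fun l => n + ∑ i : Fin 0, l i < p) = pf 0 p := by
      apply Finset.filter_true_of_mem
      intro l _
      simpa using hn
    have hcard : (pf 0 p).card = 1 := by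
      rw [pf, Fintype.card_piFinset]
      simp
    rw [hf]
    simp [hcard]
  | cons a v ihk =>
    intro n hn
    show (∑ l ∈ (pf (v.length + 1) p).filter
          (fun l : Fin (v.length + 1) → ℕ => n + ∑ i, l i < p),
        ∏ i : Fin (v.length + 1), g (n + psum l i) (List.get (a :: v) i)) = Hs g p n (a :: v)
    rw [Hs_cons]
    have hrhs : ∀ s ∈ Finset.Ioo n p, g s a * Hs g p s v
        = ∑ m ∈ (pf v.length p).filter (fun m => s + ∑ i, m i < p),
            g s a * ∏ i, g (s + psum m i) (v.get i) := by
      intro s hs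
      rw [Finset.mem_Ioo] at hs
      rw [← ihk s hs.2, Finset.mul_sum]
    rw [Finset.sum_congr rfl hrhs]
    rw [← Finset.sum_finset_product'
      (((Finset.Ioo n p) ×ˢ (pf v.length p)).filter
          (fun x : ℕ × (Fin v.length → ℕ) => x.1 + ∑ i, x.2 i < p))
      (Finset.Ioo n p)
      (fun s => (pf v.length p).filter (fun m => s + ∑ i, m i < p))
      (by
        rintro ⟨s, m⟩
        simp only [Finset.mem_filter, Finset.mem_product]
        tauto)]
    refine Finset.sum_nbij'
      (fun l : Fin (v.length + 1) → ℕ => ((n + l 0, fun j => l j.succ) : ℕ × (Fin v.length → ℕ)))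
      (fun x : ℕ × (Fin v.length → ℕ) => Fin.cons (x.1 - n) x.2) ?_ ?_ ?_ ?_ ?_
    · intro l hl
      rw [Finset.mem_filter, mem_pf] at hl
      obtain ⟨hmem, hsum⟩ := hl
      rw [Fin.sum_univ_succ] at hsum
      simp only [Finset.mem_filter, Finset.mem_product, Finset.mem_Ioo, mem_pf]
      refine ⟨⟨⟨?_, ?_⟩, fun i => hmem i.succ⟩, ?_⟩
      · have := (hmem 0).1; omega
      · omega
      · omega
    · rintro ⟨s, m⟩ hm
      rw [Finset.mem_filter, Finset.mem_product, Finset.mem_Ioo, mem_pf] at hm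
      obtain ⟨⟨⟨hs1, hs2⟩, hmm⟩, hsum⟩ := hm
      have hsum' : s + ∑ i, m i < p := hsum
      have hmm' : ∀ i, 0 < m i ∧ m i < p := hmm
      rw [Finset.mem_filter, mem_pf]
      constructor
      · intro i
        refine Fin.cases ?_ ?_ i
        · simp only [Fin.cons_zero]
          omega
        · intro j
          simp only [Fin.cons_succ]
          exact hmm' j
      · rw [Fin.sum_univ_succ]
        simp only [Fin.cons_zero, Fin.cons_succ]
        omega
    · intro l hl
      rw [Finset.mem_filter, mem_pf] at hl
      funext i
      refine Fin.cases ?_ ?_ i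
      · simp only [Fin.cons_zero]
        omega
      · intro j
        simp only [Fin.cons_succ]
    · rintro ⟨s, m⟩ hm
      rw [Finset.mem_filter, Finset.mem_product, Finset.mem_Ioo] at hm
      have hns : n ≤ s := le_of_lt hm.1.1.1
      simp only [Fin.cons_zero, Fin.cons_succ]
      rw [Prod.mk.injEq]
      constructor
      · omega
      · funext j
        simp only [Fin.cons_succ]
    · intro l hl
      show (∏ i : Fin (v.length + 1), g (n + psum l i) (List.get (a :: v) i))
          = g (n + l 0) a
            * ∏ i : Fin v.length,
                g ((n + l 0) + psum (fun j : Fin v.length => l j.succ) i) (v.get i)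
      rw [Fin.prod_univ_succ]
      congr 1
      · apply Finset.prod_congr rfl
        intro i _
        rw [psum_succ, ← Nat.add_assoc]
        rfl

lemma denInv_eq (p : PP) (k : List ℕ) (l : Fin k.length → ℕ) :
    (den p k l)⁻¹ = ∏ i, ((((psum l i : ℕ) : ZMod (p : ℕ)))⁻¹) ^ k.get i := by
  rw [den]
  rw [← Finset.prod_inv_distrib]
  apply Finset.prod_congr rfl
  intro i _
  rw [inv_pow]

/-- The `p`-component of `zetaA k` as a nested chain sum. -/
lemma zetaA_p (p : PP) (k : List ℕ) :
    (∑ l ∈ (pf k.length (p : ℕ)).filter (fun l => ∑ i, l i < (p : ℕ)), (den p k l)⁻¹)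
      = Hs (fun s a => (((s : ℕ) : ZMod (p : ℕ))⁻¹) ^ a) (p : ℕ) 0 k := by
  have hp : 0 < (p : ℕ) := p.2.pos
  rw [← tupleSum_eq_Hs (p : ℕ) _ k 0 hp]
  apply Finset.sum_congr
  · apply Finset.filter_congr
    intro l _
    simp
  · intro l _
    rw [denInv_eq]
    apply Finset.prod_congr rfl
    intro i _
    rw [Nat.zero_add]

lemma multiset_sum_pi_apply {ι : Type*} {π : ι → Type*} [∀ i, AddCommMonoid (π i)]
    (m : Multiset (∀ i, π i)) (i : ι) :
    m.sum i = (m.map (fun f => f i)).sum := by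
  induction m using Multiset.induction with
  | empty => rfl
  | cons a m ih => simp [ih]

/-- The stuffle relation for finite multiple zeta values. -/
lemma zetaA_mul_eq (k k' : List ℕ) :
    zetaA k * zetaA k' = ((stuffleI k k').map zetaA).sum := by
  have hmap : (stuffleI k k').map zetaA
      = ((stuffleI k k').map (fun u => fun p : PP =>
          ∑ l ∈ (pf u.length (p : ℕ)).filter (fun l => ∑ i, l i < (p : ℕ)),
            (den p u l)⁻¹)).map Amk := by
    rw [Multiset.map_map]
    rfl
  rw [hmap, ← map_multiset_sum, zetaA, zetaA, ← map_mul]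
  congr 1
  funext p
  rw [Pi.mul_apply, multiset_sum_pi_apply, Multiset.map_map]
  rw [zetaA_p, zetaA_p, Hs_mul (fun s a => (((s : ℕ) : ZMod (p : ℕ))⁻¹) ^ a) (fun s a b => (pow_add _ a b).symm) (p : ℕ)
    (k.length + k'.length) k k' 0 le_rfl]
  congr 1
  apply Multiset.map_congr rfl
  intro u _
  exact (zetaA_p p u).symm

lemma stuffleI_pos : ∀ (v w : List ℕ), (∀ i ∈ v, 0 < i) → (∀ i ∈ w, 0 < i) →
    ∀ u ∈ stuffleI v w, ∀ i ∈ u, 0 < i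
  | [], w => by
    intro _ hw u hu
    rw [stuffleI] at hu
    rw [Multiset.mem_singleton] at hu
    subst hu
    exact hw
  | a :: v, [] => by
    intro hv _ u hu
    rw [stuffleI] at hu
    rw [Multiset.mem_singleton] at hu
    subst hu
    exact hv
  | a :: v, b :: w => by
    intro hv hw u hu
    rw [stuffleI] at hu
    simp only [Multiset.mem_add, Multiset.mem_map] at hu
    have hv' : ∀ i ∈ v, 0 < i := fun i hi => hv i (List.mem_cons_of_mem a hi)
    have hw' : ∀ i ∈ w, 0 < i := fun i hi => hw i (List.mem_cons_of_mem b hi)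
    have ha : 0 < a := hv a List.mem_cons_self
    have hb : 0 < b := hw b List.mem_cons_self
    rcases hu with (⟨u', hu', rfl⟩ | ⟨u', hu', rfl⟩) | ⟨u', hu', rfl⟩
    · intro i hi
      rcases List.mem_cons.mp hi with rfl | hi
      · exact ha
      · exact stuffleI_pos v (b :: w) hv' hw u' hu' i hi
    · intro i hi
      rcases List.mem_cons.mp hi with rfl | hi
      · exact hb
      · exact stuffleI_pos (a :: v) w hv hw' u' hu' i hi
    · intro i hi
      rcases List.mem_cons.mp hi with rfl | hi
      · omega
      · exact stuffleI_pos v w hv' hw' u' hu' i hi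
termination_by v w => v.length + w.length

end StuffleProof

/-- **Stuffle relation for finite multiple zeta values**: ζ_𝒜(𝐤)ζ_𝒜(𝐤') = ζ_𝒜(𝐤 * 𝐤').
In particular the ℚ-span 𝒵_𝒜 of all FMZVs is a ℚ-subalgebra of 𝒜. -/
theorem zetaA_stuffle :
    (∀ k k' : List ℕ, (∀ i ∈ k, 0 < i) → (∀ i ∈ k', 0 < i) →
        zetaA k * zetaA k' = ((stuffleI k k').map zetaA).sum)
    ∧ ∀ x ∈ ZAspan, ∀ y ∈ ZAspan, x * y ∈ ZAspan := by
  constructor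
  · intro k k' _ _
    exact zetaA_mul_eq k k'
  · have hle : ZAspan * ZAspan ≤ ZAspan := by
      rw [ZAspan, Submodule.span_mul_span]
      apply Submodule.span_le.mpr
      rintro z hz
      rw [Set.mem_mul] at hz
      obtain ⟨x, hx, y, hy, rfl⟩ := hz
      obtain ⟨k, hk, rfl⟩ := hx
      obtain ⟨k', hk', rfl⟩ := hy
      rw [SetLike.mem_coe, zetaA_mul_eq]
      apply multiset_sum_mem
      intro z hz
      rw [Multiset.mem_map] at hz
      obtain ⟨u, hu, rfl⟩ := hz
      exact Submodule.subset_span ⟨u, stuffleI_pos k k' hk hk' u hu, rfl⟩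
    intro x hx y hy
    exact hle (Submodule.mul_mem_mul hx hy)

end FMP
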